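/- Let 𝒜_C = {p, p'}, ℰ_C = {not p, not ¬p}, let Π_G = (𝒜_C, ℰ_C, {p' ← ¬not ¬p}) and Π_S = (𝒜_C, ℰ_C, {p' ← not p}). Then Π_G and Π_S are not strongly equivalent: the pair (∅, {p}) belongs to 𝒮ℰ_{Π_G}({not p}) but not to 𝒮ℰ_{Π_S}({not p}); moreover, for the epistemic-negation-free program Π = (𝒜_C, ℰ_C, {p ← ¬p'}) one has CWV(Π_G ∪ Π) = { { {p} } } while CWV(Π_S ∪ Π) = { { {p'} } }. -/
import Mathlib


variable {V : Type}

/-- A (default-negation) literal: an atom or its default negation. -/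
inductive Lit (V : Type) : Type
  | pos (a : V) : Lit V
  | neg (a : V) : Lit V

namespace Lit

/-- `I ⊨ ℓ`. -/
def sat (I : Set V) : Lit V → Prop
  | pos a => a ∈ I
  | neg a => a ∉ I

/-- The complementary literal (so that `I ⊨ ¬ℓ` iff `I ⊨ ℓ.flip`). -/
def flip : Lit V → Lit V
  | pos a => neg a
  | neg a => pos a

/-- The underlying atom of a literal. -/
def atom : Lit V → V
  | pos a => a
  | neg a => a

end Lit

/-- A standard (ASP) rule `head ← pos, {¬ℓ | ℓ ∈ neg}`; the set `neg` collects the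
literals occurring under one extra default negation in the body (so an atom `a ∈ pos`
is a positive body atom, `Lit.pos c ∈ neg` encodes the body element `¬c`, and
`Lit.neg d ∈ neg` encodes the doubly negated body element `¬¬d`). -/
structure Rule (V : Type) : Type where
  head : Set V
  pos : Set V
  neg : Set (Lit V)

namespace Rule

/-- The rule only uses atoms from `A`. -/
def wf (r : Rule V) (A : Set V) : Prop :=
  r.head ⊆ A ∧ r.pos ⊆ A ∧ ∀ ℓ ∈ r.neg, ℓ.atom ∈ A

/-- `I` is a model of the rule. -/
def sat (I : Set V) (r : Rule V) : Prop :=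
  (r.pos ⊆ I ∧ ∀ ℓ ∈ r.neg, ¬ ℓ.sat I) → ∃ a ∈ r.head, a ∈ I

/-- `X` satisfies the GL-reduct of the rule w.r.t. `Y`: if the rule survives the
reduct (no negated body literal is satisfied by `Y`), then `X` satisfies the
remaining rule `head ← pos`. -/
def redSat (Y X : Set V) (r : Rule V) : Prop :=
  (∀ ℓ ∈ r.neg, ¬ ℓ.sat Y) → (r.pos ⊆ X → ∃ a ∈ r.head, a ∈ X)

end Rule

/-- A ground logic program `(𝒜, ℛ)`. -/
structure Program (V : Type) : Type where
  A : Set V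
  R : Set (Rule V)

namespace Program

def wf (P : Program V) : Prop := ∀ r ∈ P.R, r.wf P.A

/-- `I ⊨ P`. -/
def model (P : Program V) (I : Set V) : Prop := ∀ r ∈ P.R, r.sat I

/-- `X ⊨ P^Y` (the GL-reduct). -/
def redModel (P : Program V) (Y X : Set V) : Prop := ∀ r ∈ P.R, r.redSat Y X

/-- `M` is an answer set of `P`. -/
def answerSet (P : Program V) (M : Set V) : Prop :=
  M ⊆ P.A ∧ P.model M ∧ ¬ ∃ M', M' ⊂ M ∧ P.redModel M M'

/-- `AS(P)`, the set of answer sets. -/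
def AS (P : Program V) : Set (Set V) := {M | P.answerSet M}

/-- The set of SE-models `(X,Y)` with `X ⊆ Y ⊆ 𝒜`, `Y ⊨ P` and `X ⊨ P^Y`. -/
def SE (P : Program V) : Set (Set V × Set V) :=
  {p | p.1 ⊆ p.2 ∧ p.2 ⊆ P.A ∧ P.model p.2 ∧ P.redModel p.2 p.1}

/-- Componentwise union of programs. -/
def union (P₁ P₂ : Program V) : Program V := ⟨P₁.A ∪ P₂.A, P₁.R ∪ P₂.R⟩

/-- Strong equivalence of plain logic programs. -/
def strongEq (P₁ P₂ : Program V) : Prop :=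
  ∀ P : Program V, P.wf → (P₁.union P).AS = (P₂.union P).AS

end Program

/-- An ELP rule `head ← opos, ¬oneg, not epos, ¬ not eneg`: epistemic literals `not ℓ`
are identified with the literal `ℓ` they negate; `epos` collects the literals occurring
under plain epistemic negation and `eneg` those occurring under default-negated
epistemic negation. -/
structure ERule (V : Type) : Type where
  head : Set V
  opos : Set V
  oneg : Set (Lit V)
  epos : Set (Lit V)
  eneg : Set (Lit V)

namespace ERule

/-- The rule only uses atoms from `A` and epistemic literals from `E`. -/
def wf (r : ERule V) (A : Set V) (E : Set (Lit V)) : Prop :=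
  r.head ⊆ A ∧ r.opos ⊆ A ∧ (∀ ℓ ∈ r.oneg, ℓ.atom ∈ A) ∧ r.epos ⊆ E ∧ r.eneg ⊆ E

/-- The rule of the epistemic reduct w.r.t. guess `Φ` (meaningful when no `eneg`
literal belongs to `Φ`, in which case: epistemic literals `not ℓ ∈ Φ` become `⊤`,
the remaining `not ℓ` in `epos` become `¬ℓ`, and `¬ not ℓ` in `eneg` becomes `¬¬ℓ`,
i.e. `¬(ℓ.flip)`, reading triple negations as single ones). -/
def reduct (r : ERule V) (Φ : Set (Lit V)) : Rule V :=
  ⟨r.head, r.opos, r.oneg ∪ (r.epos \ Φ) ∪ (Lit.flip '' r.eneg)⟩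

/-- The underlying plain rule of an epistemic-negation-free ELP rule. -/
def toRule (r : ERule V) : Rule V := ⟨r.head, r.opos, r.oneg⟩

end ERule

/-- A plain rule viewed as an ELP rule. -/
def Rule.toERule (r : Rule V) : ERule V := ⟨r.head, r.pos, r.neg, ∅, ∅⟩

/-- An epistemic logic program `(𝒜, ℰ, ℛ)`. -/
structure ELP (V : Type) : Type where
  A : Set V
  E : Set (Lit V)
  R : Set (ERule V)

/-- `I` is `Φ`-compatible w.r.t. `E`. -/
def compatible (E Φ : Set (Lit V)) (I : Set (Set V)) : Prop :=
  I.Nonempty ∧ (∀ ℓ ∈ Φ, ∃ J ∈ I, ¬ ℓ.sat J) ∧ (∀ ℓ ∈ E \ Φ, ∀ J ∈ I, ℓ.sat J)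

/-- `Φ` is realizable in the set `I` of interpretations (w.r.t. `E`). -/
def realizableIn (E Φ : Set (Lit V)) (I : Set (Set V)) : Prop :=
  ∃ I', I' ⊆ I ∧ compatible E Φ I'

/-- A guess `Φ` is consistent w.r.t. `E`: whenever `E` contains both `not a` and
`not ¬a`, `Φ` contains at least one of them. -/
def consistentGuess (E Φ : Set (Lit V)) : Prop :=
  ∀ a : V, Lit.pos a ∈ E → Lit.neg a ∈ E → (Lit.pos a ∈ Φ ∨ Lit.neg a ∈ Φ)

namespace ELP

/-- Well-formedness: `E` consists of epistemic literals over `A`, and every rule is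
over `A` and `E`. -/
def wf (P : ELP V) : Prop :=
  (∀ ℓ ∈ P.E, ℓ.atom ∈ P.A) ∧ ∀ r ∈ P.R, r.wf P.A P.E

/-- An epistemic-negation-free (plain ASP) program viewed as an ELP. -/
def isASP (P : ELP V) : Prop := P.E = ∅ ∧ ∀ r ∈ P.R, r.epos = ∅ ∧ r.eneg = ∅

/-- Componentwise union of ELPs. -/
def union (P₁ P₂ : ELP V) : ELP V := ⟨P₁.A ∪ P₂.A, P₁.E ∪ P₂.E, P₁.R ∪ P₂.R⟩

/-- The epistemic reduct `P^Φ`: rules with some `eneg` literal in `Φ` are deleted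
(their body contains `¬⊤`), the remaining rules are reduced. -/
def eReduct (P : ELP V) (Φ : Set (Lit V)) : Program V :=
  ⟨P.A, {q | ∃ r ∈ P.R, (∀ ℓ ∈ r.eneg, ℓ ∉ Φ) ∧ q = r.reduct Φ}⟩

/-- `M` is a candidate world view of `P` w.r.t. the guess `Φ`. -/
def isCWVwrt (P : ELP V) (Φ : Set (Lit V)) (M : Set (Set V)) : Prop :=
  Φ ⊆ P.E ∧ M = (P.eReduct Φ).AS ∧ compatible P.E Φ M

/-- `M` is a candidate world view of `P`. -/
def isCWV (P : ELP V) (M : Set (Set V)) : Prop := ∃ Φ, P.isCWVwrt Φ M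

/-- `M` is a world view of `P`: a CWV whose associated guess is subset-maximal. -/
def isWV (P : ELP V) (M : Set (Set V)) : Prop :=
  ∃ Φ, P.isCWVwrt Φ M ∧ ∀ Φ' M', P.isCWVwrt Φ' M' → ¬ Φ ⊂ Φ'

/-- `Φ` is realizable in `P`: realizable in the set of models of `P^Φ`. -/
def realizable (P : ELP V) (Φ : Set (Lit V)) : Prop :=
  realizableIn P.E Φ {I | I ⊆ P.A ∧ (P.eReduct Φ).model I}

/-- The SE-function of `P`: `SE(Π^Φ)` if `Φ` is realizable in `P`, and `∅` otherwise. -/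
def SEfun (P : ELP V) (Φ : Set (Lit V)) : Set (Set V × Set V) :=
  {p | P.realizable Φ ∧ p ∈ (P.eReduct Φ).SE}

/-- CWV-equivalence. -/
def cwvEq (P₁ P₂ : ELP V) : Prop := ∀ M, P₁.isCWV M ↔ P₂.isCWV M

/-- WV-equivalence. -/
def wvEq (P₁ P₂ : ELP V) : Prop := ∀ M, P₁.isWV M ↔ P₂.isWV M

/-- Strong ELP-CWV-equivalence. -/
def strongELPCWVEq (P₁ P₂ : ELP V) : Prop :=
  ∀ Q : ELP V, Q.wf → cwvEq (P₁.union Q) (P₂.union Q)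

/-- Strong ELP-WV-equivalence. -/
def strongELPWVEq (P₁ P₂ : ELP V) : Prop :=
  ∀ Q : ELP V, Q.wf → wvEq (P₁.union Q) (P₂.union Q)

/-- Strong ASP-CWV-equivalence. -/
def strongASPCWVEq (P₁ P₂ : ELP V) : Prop :=
  ∀ Q : ELP V, Q.wf → Q.isASP → cwvEq (P₁.union Q) (P₂.union Q)

/-- Strong ASP-WV-equivalence. -/
def strongASPWVEq (P₁ P₂ : ELP V) : Prop :=
  ∀ Q : ELP V, Q.wf → Q.isASP → wvEq (P₁.union Q) (P₂.union Q)

end ELP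

/-- The Gelfond-CWA program `p' ← ¬ not ¬p` over `𝒜 = {p, p'}`, `ℰ = {not p, not ¬p}`. -/
def GelfondCWA (p p' : V) : ELP V :=
  ⟨{p, p'}, {Lit.pos p, Lit.neg p}, {⟨{p'}, ∅, ∅, ∅, {Lit.neg p}⟩}⟩

/-- The Shen-Eiter-CWA program `p' ← not p` over `𝒜 = {p, p'}`, `ℰ = {not p, not ¬p}`. -/
def ShenEiterCWA (p p' : V) : ELP V :=
  ⟨{p, p'}, {Lit.pos p, Lit.neg p}, {⟨{p'}, ∅, ∅, {Lit.pos p}, ∅⟩}⟩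

section Aux19
variable (p p' : V)

/-- reduct program `{p' ← ¬p, p ← ¬p'}`. -/
def Q1 : Program V := ⟨{p, p'}, {⟨{p'}, ∅, {Lit.pos p}⟩, ⟨{p}, ∅, {Lit.pos p'}⟩}⟩
/-- reduct program `{p ← ¬p'}`. -/
def Q2 : Program V := ⟨{p, p'}, {⟨{p}, ∅, {Lit.pos p'}⟩}⟩
/-- reduct program `{p'., p ← ¬p'}`. -/
def Q3 : Program V := ⟨{p, p'}, {⟨{p'}, ∅, (∅ : Set (Lit V))⟩, ⟨{p}, ∅, {Lit.pos p'}⟩}⟩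
/-- reduct program `{p' ← ¬p}`. -/
def Q4 : Program V := ⟨{p, p'}, {⟨{p'}, ∅, {Lit.pos p}⟩}⟩

lemma reduct_rG (Φ : Set (Lit V)) :
    (ERule.mk {p'} ∅ ∅ ∅ {Lit.neg p}).reduct Φ = ⟨{p'}, ∅, {Lit.pos p}⟩ := by
  simp [ERule.reduct, Lit.flip]

lemma reduct_rP (Φ : Set (Lit V)) :
    (ERule.mk {p} ∅ {Lit.pos p'} ∅ ∅).reduct Φ = ⟨{p}, ∅, {Lit.pos p'}⟩ := by
  simp [ERule.reduct]

lemma reduct_rS_mem {Φ : Set (Lit V)} (h : Lit.pos p ∈ Φ) :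
    (ERule.mk {p'} ∅ ∅ {Lit.pos p} ∅).reduct Φ = ⟨{p'}, ∅, (∅ : Set (Lit V))⟩ := by
  simp [ERule.reduct, Set.diff_eq_empty.mpr (Set.singleton_subset_iff.mpr h)]

lemma reduct_rS_notmem {Φ : Set (Lit V)} (h : Lit.pos p ∉ Φ) :
    (ERule.mk {p'} ∅ ∅ {Lit.pos p} ∅).reduct Φ = ⟨{p'}, ∅, {Lit.pos p}⟩ := by
  simp only [ERule.reduct, Set.image_empty, Set.union_empty, Set.empty_union]
  congr 1
  ext ℓ
  simp only [Set.mem_diff, Set.mem_singleton_iff, and_iff_left_iff_imp]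
  rintro rfl; exact h

end Aux19
section Aux19b
variable (p p' : V)

lemma GPi_red_mem {Φ : Set (Lit V)} (h : Lit.neg p ∈ Φ) :
    ((GelfondCWA p p').union
        (ELP.mk {p, p'} {Lit.pos p, Lit.neg p}
          {ERule.mk {p} ∅ {Lit.pos p'} ∅ ∅})).eReduct Φ = Q2 p p' := by
  simp only [ELP.eReduct, ELP.union, GelfondCWA, Q2]
  congr 1
  · exact Set.union_self _
  · ext q
    simp only [Set.mem_setOf_eq, Set.mem_union, Set.mem_singleton_iff]
    constructor
    · rintro ⟨r, hr | hr, hcond, rfl⟩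
      · subst hr; exact absurd h (hcond _ rfl)
      · subst hr; exact reduct_rP p p' Φ
    · rintro rfl
      exact ⟨_, Or.inr rfl, by simp, (reduct_rP p p' Φ).symm⟩

lemma GPi_red_notmem {Φ : Set (Lit V)} (h : Lit.neg p ∉ Φ) :
    ((GelfondCWA p p').union
        (ELP.mk {p, p'} {Lit.pos p, Lit.neg p}
          {ERule.mk {p} ∅ {Lit.pos p'} ∅ ∅})).eReduct Φ = Q1 p p' := by
  simp only [ELP.eReduct, ELP.union, GelfondCWA, Q1]
  congr 1
  · exact Set.union_self _
  · ext q
    simp only [Set.mem_setOf_eq, Set.mem_union, Set.mem_singleton_iff,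
      Set.mem_insert_iff]
    constructor
    · rintro ⟨r, hr | hr, hcond, rfl⟩
      · subst hr; exact Or.inl (reduct_rG p p' Φ)
      · subst hr; exact Or.inr (reduct_rP p p' Φ)
    · rintro (rfl | rfl)
      · refine ⟨_, Or.inl rfl, ?_, (reduct_rG p p' Φ).symm⟩
        intro ℓ hℓ; simp only [Set.mem_singleton_iff] at hℓ; subst hℓ; exact h
      · exact ⟨_, Or.inr rfl, by simp, (reduct_rP p p' Φ).symm⟩

lemma SPi_red_mem {Φ : Set (Lit V)} (h : Lit.pos p ∈ Φ) :
    ((ShenEiterCWA p p').union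
        (ELP.mk {p, p'} {Lit.pos p, Lit.neg p}
          {ERule.mk {p} ∅ {Lit.pos p'} ∅ ∅})).eReduct Φ = Q3 p p' := by
  simp only [ELP.eReduct, ELP.union, ShenEiterCWA, Q3]
  congr 1
  · exact Set.union_self _
  · ext q
    simp only [Set.mem_setOf_eq, Set.mem_union, Set.mem_singleton_iff,
      Set.mem_insert_iff]
    constructor
    · rintro ⟨r, hr | hr, hcond, rfl⟩
      · subst hr; exact Or.inl (reduct_rS_mem p p' h)
      · subst hr; exact Or.inr (reduct_rP p p' Φ)
    · rintro (rfl | rfl)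
      · exact ⟨_, Or.inl rfl, by simp, (reduct_rS_mem p p' h).symm⟩
      · exact ⟨_, Or.inr rfl, by simp, (reduct_rP p p' Φ).symm⟩

lemma SPi_red_notmem {Φ : Set (Lit V)} (h : Lit.pos p ∉ Φ) :
    ((ShenEiterCWA p p').union
        (ELP.mk {p, p'} {Lit.pos p, Lit.neg p}
          {ERule.mk {p} ∅ {Lit.pos p'} ∅ ∅})).eReduct Φ = Q1 p p' := by
  simp only [ELP.eReduct, ELP.union, ShenEiterCWA, Q1]
  congr 1
  · exact Set.union_self _
  · ext q
    simp only [Set.mem_setOf_eq, Set.mem_union, Set.mem_singleton_iff,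
      Set.mem_insert_iff]
    constructor
    · rintro ⟨r, hr | hr, hcond, rfl⟩
      · subst hr; exact Or.inl (reduct_rS_notmem p p' h)
      · subst hr; exact Or.inr (reduct_rP p p' Φ)
    · rintro (rfl | rfl)
      · exact ⟨_, Or.inl rfl, by simp, (reduct_rS_notmem p p' h).symm⟩
      · exact ⟨_, Or.inr rfl, by simp, (reduct_rP p p' Φ).symm⟩

lemma G_red_posp :
    (GelfondCWA p p').eReduct {Lit.pos p} = Q4 p p' := by
  simp only [ELP.eReduct, GelfondCWA, Q4]
  congr 1
  ext q
  simp only [Set.mem_setOf_eq, Set.mem_singleton_iff]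
  constructor
  · rintro ⟨r, rfl, hcond, rfl⟩
    exact reduct_rG p p' _
  · rintro rfl
    refine ⟨_, rfl, ?_, (reduct_rG p p' _).symm⟩
    intro ℓ hℓ
    simp only [Set.mem_singleton_iff] at hℓ ⊢
    subst hℓ; simp

end Aux19b
section Aux19c
variable (p p' : V)

lemma mem_AS_Q1_p (hpp : p ≠ p') : {p} ∈ (Q1 p p').AS := by
  refine ⟨by simp [Q1], ?_, ?_⟩
  · rintro r (rfl | rfl)
    · rintro ⟨-, hneg⟩
      exact absurd rfl (hneg (Lit.pos p) rfl)
    · rintro -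
      exact ⟨p, rfl, rfl⟩
  · rintro ⟨M', hss, hred⟩
    have h2 := hred _ (Or.inr rfl)
    have hp : p ∈ M' := by
      obtain ⟨a, ha, haM⟩ := h2 (by rintro ℓ rfl; exact fun h => hpp (Set.mem_singleton_iff.mp h).symm) (Set.empty_subset _)
      rwa [Set.mem_singleton_iff.mp ha] at haM
    exact (Set.ssubset_def.mp hss).2 (Set.singleton_subset_iff.mpr hp)

lemma mem_AS_Q1_p' (hpp : p ≠ p') : {p'} ∈ (Q1 p p').AS := by
  refine ⟨by simp [Q1], ?_, ?_⟩
  · rintro r (rfl | rfl)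
    · rintro -
      exact ⟨p', rfl, rfl⟩
    · rintro ⟨-, hneg⟩
      exact absurd rfl (hneg (Lit.pos p') rfl)
  · rintro ⟨M', hss, hred⟩
    have h1 := hred _ (Or.inl rfl)
    have hp : p' ∈ M' := by
      obtain ⟨a, ha, haM⟩ := h1 (by rintro ℓ rfl; exact fun h => hpp (Set.mem_singleton_iff.mp h)) (Set.empty_subset _)
      rwa [Set.mem_singleton_iff.mp ha] at haM
    exact (Set.ssubset_def.mp hss).2 (Set.singleton_subset_iff.mpr hp)

lemma AS_Q2 (hpp : p ≠ p') : (Q2 p p').AS = {{p}} := by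
  ext M
  simp only [Set.mem_singleton_iff]
  constructor
  · rintro ⟨hsub, hmod, hmin⟩
    have hp' : p' ∉ M := by
      intro hp'
      apply hmin
      refine ⟨∅, Set.empty_ssubset.mpr ⟨p', hp'⟩, ?_⟩
      rintro r rfl
      rintro hneg -
      exact absurd hp' (hneg (Lit.pos p') rfl)
    have hp : p ∈ M := by
      obtain ⟨a, ha, haM⟩ := hmod _ rfl ⟨Set.empty_subset _, by rintro ℓ rfl; exact hp'⟩
      rwa [Set.mem_singleton_iff.mp ha] at haM
    apply Set.Subset.antisymm
    · intro x hx
      rcases hsub hx with rfl | h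
      · rfl
      · exact absurd (Set.mem_singleton_iff.mp h ▸ hx) hp'
    · exact Set.singleton_subset_iff.mpr hp
  · rintro rfl
    refine ⟨by simp [Q2], ?_, ?_⟩
    · rintro r rfl
      rintro -
      exact ⟨p, rfl, rfl⟩
    · rintro ⟨M', hss, hred⟩
      have h2 := hred _ rfl
      have hp : p ∈ M' := by
        obtain ⟨a, ha, haM⟩ := h2 (by rintro ℓ rfl; exact fun h => hpp (Set.mem_singleton_iff.mp h).symm) (Set.empty_subset _)
        rwa [Set.mem_singleton_iff.mp ha] at haM
      exact (Set.ssubset_def.mp hss).2 (Set.singleton_subset_iff.mpr hp)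

lemma AS_Q3 : (Q3 p p').AS = {{p'}} := by
  ext M
  simp only [Set.mem_singleton_iff]
  constructor
  · rintro ⟨hsub, hmod, hmin⟩
    have hp' : p' ∈ M := by
      obtain ⟨a, ha, haM⟩ := hmod _ (Or.inl rfl) ⟨Set.empty_subset _, by rintro ℓ hℓ; exact absurd hℓ (Set.notMem_empty ℓ)⟩
      rwa [Set.mem_singleton_iff.mp ha] at haM
    by_contra hne
    apply hmin
    refine ⟨{p'}, Set.ssubset_iff_subset_ne.mpr ⟨Set.singleton_subset_iff.mpr hp', fun h => hne h.symm⟩, ?_⟩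
    rintro r (rfl | rfl)
    · rintro - -
      exact ⟨p', rfl, rfl⟩
    · rintro hneg -
      exact absurd hp' (hneg (Lit.pos p') rfl)
  · rintro rfl
    refine ⟨by simp [Q3], ?_, ?_⟩
    · rintro r (rfl | rfl)
      · rintro -
        exact ⟨p', rfl, rfl⟩
      · rintro ⟨-, hneg⟩
        exact absurd rfl (hneg (Lit.pos p') rfl)
    · rintro ⟨M', hss, hred⟩
      have h1 := hred _ (Or.inl rfl)
      have hp : p' ∈ M' := by
        obtain ⟨a, ha, haM⟩ := h1 (by rintro ℓ hℓ; exact absurd hℓ (Set.notMem_empty ℓ)) (Set.empty_subset _)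
        rwa [Set.mem_singleton_iff.mp ha] at haM
      exact (Set.ssubset_def.mp hss).2 (Set.singleton_subset_iff.mpr hp)

end Aux19c
/-- The Gelfond-CWA and Shen-Eiter-CWA programs are not strongly
equivalent: `(∅, {p}) ∈ 𝒮ℰ_{Π_G}({not p})` but `(∅, {p}) ∉ 𝒮ℰ_{Π_S}({not p})`, and
adding the epistemic-negation-free program `{p ← ¬p'}` yields
`CWV(Π_G ∪ Π) = {{{p}}}` while `CWV(Π_S ∪ Π) = {{{p'}}}`. -/
theorem stmt19 {V : Type} (p p' : V) (hpp : p ≠ p') :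
    ¬ ELP.strongELPCWVEq (GelfondCWA p p') (ShenEiterCWA p p') ∧
    ((∅, {p}) : Set V × Set V) ∈ (GelfondCWA p p').SEfun {Lit.pos p} ∧
    ((∅, {p}) : Set V × Set V) ∉ (ShenEiterCWA p p').SEfun {Lit.pos p} ∧
    {M | ((GelfondCWA p p').union
        (ELP.mk {p, p'} {Lit.pos p, Lit.neg p}
          {ERule.mk {p} ∅ {Lit.pos p'} ∅ ∅})).isCWV M} =
      ({{{p}}} : Set (Set (Set V))) ∧
    {M | ((ShenEiterCWA p p').union
        (ELP.mk {p, p'} {Lit.pos p, Lit.neg p}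
          {ERule.mk {p} ∅ {Lit.pos p'} ∅ ∅})).isCWV M} =
      ({{{p'}}} : Set (Set (Set V))) := by
  have h4 : {M | ((GelfondCWA p p').union
        (ELP.mk {p, p'} {Lit.pos p, Lit.neg p}
          {ERule.mk {p} ∅ {Lit.pos p'} ∅ ∅})).isCWV M} =
      ({{{p}}} : Set (Set (Set V))) := by
    ext M
    simp only [Set.mem_setOf_eq, Set.mem_singleton_iff]
    constructor
    · rintro ⟨Φ, hΦE, hMeq, hne, hsome, hall⟩
      by_cases hn : Lit.neg p ∈ Φ
      · rw [hMeq, GPi_red_mem p p' hn, AS_Q2 p p' hpp]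
      · exfalso
        have hallJ : ∀ J ∈ M, p ∉ J :=
          fun J hJ => hall (Lit.neg p) ⟨Or.inl (Or.inr rfl), hn⟩ J hJ
        by_cases hp : Lit.pos p ∈ Φ
        · have hM : M = (Q1 p p').AS := by rw [hMeq, GPi_red_notmem p p' hn]
          exact hallJ {p} (hM ▸ mem_AS_Q1_p p p' hpp) rfl
        · obtain ⟨J, hJ⟩ := hne
          exact hallJ J hJ (hall (Lit.pos p) ⟨Or.inl (Or.inl rfl), hp⟩ J hJ)
    · rintro rfl
      refine ⟨{Lit.neg p}, ?_, ?_, ⟨{p}, rfl⟩, ?_, ?_⟩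
      · rintro ℓ rfl
        exact Or.inl (Or.inr rfl)
      · rw [GPi_red_mem p p' (Set.mem_singleton _), AS_Q2 p p' hpp]
      · rintro ℓ rfl
        exact ⟨{p}, rfl, fun h => h rfl⟩
      · rintro ℓ ⟨hE, hn⟩ J rfl
        rcases hE with (rfl | h) | (rfl | h)
        · exact rfl
        · exact absurd h hn
        · exact rfl
        · exact absurd h hn
  have h5 : {M | ((ShenEiterCWA p p').union
        (ELP.mk {p, p'} {Lit.pos p, Lit.neg p}
          {ERule.mk {p} ∅ {Lit.pos p'} ∅ ∅})).isCWV M} =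
      ({{{p'}}} : Set (Set (Set V))) := by
    ext M
    simp only [Set.mem_setOf_eq, Set.mem_singleton_iff]
    constructor
    · rintro ⟨Φ, hΦE, hMeq, hne, hsome, hall⟩
      by_cases hp : Lit.pos p ∈ Φ
      · rw [hMeq, SPi_red_mem p p' hp, AS_Q3 p p']
      · exfalso
        have hM : M = (Q1 p p').AS := by rw [hMeq, SPi_red_notmem p p' hp]
        have : p ∈ ({p'} : Set V) :=
          hall (Lit.pos p) ⟨Or.inl (Or.inl rfl), hp⟩ {p'} (hM ▸ mem_AS_Q1_p' p p' hpp)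
        exact hpp (Set.mem_singleton_iff.mp this)
    · rintro rfl
      refine ⟨{Lit.pos p}, ?_, ?_, ⟨{p'}, rfl⟩, ?_, ?_⟩
      · rintro ℓ rfl
        exact Or.inl (Or.inl rfl)
      · rw [SPi_red_mem p p' (Set.mem_singleton _), AS_Q3 p p']
      · rintro ℓ rfl
        exact ⟨{p'}, rfl, fun h => hpp (Set.mem_singleton_iff.mp h)⟩
      · rintro ℓ ⟨hE, hn⟩ J rfl
        rcases hE with (rfl | rfl) | (rfl | rfl)
        · exact absurd rfl hn
        · exact fun h => hpp (Set.mem_singleton_iff.mp h)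
        · exact absurd rfl hn
        · exact fun h => hpp (Set.mem_singleton_iff.mp h)
  refine ⟨?_, ?_, ?_, h4, h5⟩
  · -- not strongly equivalent
    intro hstrong
    have hwf : (ELP.mk {p, p'} {Lit.pos p, Lit.neg p}
        {ERule.mk {p} ∅ {Lit.pos p'} ∅ ∅} : ELP V).wf := by
      constructor
      · rintro ℓ (rfl | rfl)
        · exact Or.inl rfl
        · exact Or.inl rfl
      · rintro r rfl
        refine ⟨by simp, by simp, ?_, by simp, by simp⟩
        rintro ℓ rfl
        exact Or.inr rfl
    have h1 : ((GelfondCWA p p').union _).isCWV {{p}} :=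
      (Set.ext_iff.mp h4 {{p}}).mpr rfl
    have h2 := (hstrong _ hwf {{p}}).mp h1
    have h3 : ({{p}} : Set (Set V)) = {{p'}} :=
      (Set.ext_iff.mp h5 {{p}}).mp h2
    have : ({p} : Set V) = {p'} := Set.singleton_eq_singleton_iff.mp h3
    exact hpp (Set.singleton_eq_singleton_iff.mp this)
  · -- (∅,{p}) ∈ SEfun G {pos p}
    refine Set.mem_setOf_eq ▸ ⟨⟨{{p'}}, ?_, ⟨{p'}, rfl⟩, ?_, ?_⟩, ?_⟩
    · rintro I rfl
      refine ⟨by simp [GelfondCWA], ?_⟩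
      rw [G_red_posp p p']
      rintro r rfl
      rintro -
      exact ⟨p', rfl, rfl⟩
    · rintro ℓ rfl
      exact ⟨{p'}, rfl, fun h => hpp (Set.mem_singleton_iff.mp h)⟩
    · rintro ℓ ⟨hE, hn⟩ J rfl
      rcases hE with rfl | rfl
      · exact absurd rfl hn
      · exact fun h => hpp (Set.mem_singleton_iff.mp h)
    · show ((∅, {p}) : Set V × Set V) ∈ ((GelfondCWA p p').eReduct {Lit.pos p}).SE
      rw [G_red_posp p p']
      refine ⟨Set.empty_subset _, by simp [Q4], ?_, ?_⟩
      · rintro r rfl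
        rintro ⟨-, hneg⟩
        exact absurd rfl (hneg (Lit.pos p) rfl)
      · rintro r rfl
        rintro hneg -
        exact absurd rfl (hneg (Lit.pos p) rfl)
  · -- (∅,{p}) ∉ SEfun S {pos p}
    rintro ⟨-, hSE⟩
    obtain ⟨-, -, hmod, -⟩ := hSE
    obtain ⟨a, ha, haM⟩ := hmod ⟨{p'}, ∅, (∅ : Set (Lit V))⟩
      ⟨_, rfl, by simp, (reduct_rS_mem p p' (Set.mem_singleton _)).symm⟩
      ⟨Set.empty_subset _, by rintro ℓ hℓ; exact absurd hℓ (Set.notMem_empty ℓ)⟩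
    rw [Set.mem_singleton_iff.mp ha] at haM
    exact hpp (Set.mem_singleton_iff.mp haM).symm
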